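/- Let t be a positive integer and λ = {λ_1,...,λ_l} a partition of t. Then the monomial symmetric polynomial m_λ(p) in variables p_1,...,p_m can be written as (-1)^{l-1}(l-1)! · s_t(p) plus a polynomial in the power sums s_1(p),...,s_{t-1}(p), where s_u(p) = Σ_i p_i^u. -/
import Mathlib

open Finset

private lemma snoc_inj {l m : ℕ} (f : Fin l ↪ Fin m) (x : Fin m)
    (hx : ∀ a, f a ≠ x) : Function.Injective (Fin.snoc f x : Fin (l+1) → Fin m) := by
  intro a b hab
  rcases Fin.eq_castSucc_or_eq_last a with ⟨a', rfl⟩ | rfl <;>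
    rcases Fin.eq_castSucc_or_eq_last b with ⟨b', rfl⟩ | rfl
  · simp only [Fin.snoc_castSucc] at hab
    exact congrArg _ (f.injective hab)
  · simp only [Fin.snoc_castSucc, Fin.snoc_last] at hab
    exact absurd hab (hx a')
  · simp only [Fin.snoc_castSucc, Fin.snoc_last] at hab
    exact absurd hab.symm (hx b')
  · rfl

private lemma key (m l : ℕ) (lam : Fin (l+1) → ℕ) (p : Fin m → ℝ) :
    (∑ f : Fin (l+1) ↪ Fin m, ∏ r, p (f r) ^ lam r)
      = (∑ f : Fin l ↪ Fin m, ∏ r, p (f r) ^ lam r.castSucc) * (∑ i, p i ^ lam (Fin.last l))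
        - ∑ j : Fin l, ∑ f : Fin l ↪ Fin m,
            ∏ r, p (f r) ^ (lam r.castSucc + if r = j then lam (Fin.last l) else 0) := by
  have h1 : (∑ f : Fin l ↪ Fin m, ∏ r, p (f r) ^ lam r.castSucc) * (∑ i, p i ^ lam (Fin.last l))
      = ∑ f : Fin l ↪ Fin m, ∑ i, (∏ r, p (f r) ^ lam r.castSucc) * p i ^ lam (Fin.last l) := by
    rw [Finset.sum_mul]
    exact Finset.sum_congr rfl fun f _ => by rw [Finset.mul_sum]
  have hsplit : ∀ f : Fin l ↪ Fin m,
      (∑ i, (∏ r, p (f r) ^ lam r.castSucc) * p i ^ lam (Fin.last l))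
        = (∑ i ∈ (Finset.univ.image f)ᶜ, (∏ r, p (f r) ^ lam r.castSucc) * p i ^ lam (Fin.last l))
          + ∑ i ∈ Finset.univ.image f, (∏ r, p (f r) ^ lam r.castSucc) * p i ^ lam (Fin.last l) :=
    fun f => (Finset.sum_compl_add_sum _ _).symm
  have h2 : ∑ f : Fin l ↪ Fin m, ∑ i ∈ (Finset.univ.image f)ᶜ,
      (∏ r, p (f r) ^ lam r.castSucc) * p i ^ lam (Fin.last l)
      = ∑ f : Fin (l+1) ↪ Fin m, ∏ r, p (f r) ^ lam r := by
    rw [Finset.sum_sigma']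
    have hmem : ∀ x : (_ : Fin l ↪ Fin m) × Fin m,
        x ∈ (Finset.univ : Finset (Fin l ↪ Fin m)).sigma (fun f => (Finset.univ.image ⇑f)ᶜ)
          → ∀ a, x.1 a ≠ x.2 := by
      intro x hx a ha
      have := (Finset.mem_sigma.mp hx).2
      rw [Finset.mem_compl] at this
      exact this (Finset.mem_image.mpr ⟨a, Finset.mem_univ a, ha⟩)
    refine Finset.sum_bij'
      (fun x hx => ⟨Fin.snoc x.1 x.2, snoc_inj x.1 x.2 (hmem x hx)⟩)
      (fun g _ => ⟨Fin.castSuccEmb.trans g, g (Fin.last l)⟩) (fun x hx => Finset.mem_univ _)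
      ?_ ?_ ?_ ?_
    · intro g _
      rw [Finset.mem_sigma]
      refine ⟨Finset.mem_univ _, Finset.mem_compl.mpr ?_⟩
      intro hmem'
      obtain ⟨a, -, ha⟩ := Finset.mem_image.mp hmem'
      have : (Fin.castSucc a : Fin (l+1)) = Fin.last l := g.injective ha
      exact absurd this (Fin.castSucc_lt_last a).ne
    · intro x hx
      ext
      · simp [show (Fin.castLE (Nat.le_succ l) : Fin l → Fin (l+1)) = Fin.castSucc from rfl,
          Fin.snoc_castSucc]
      · simp [Fin.snoc_last]
    · intro g _
      ext r
      simp only [Function.Embedding.coeFn_mk]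
      rcases Fin.eq_castSucc_or_eq_last r with ⟨r', rfl⟩ | rfl
      · simp [show (Fin.castLE (Nat.le_succ l) : Fin l → Fin (l+1)) = Fin.castSucc from rfl,
          Fin.snoc_castSucc]
      · simp [Fin.snoc_last]
    · intro x hx
      rw [Fin.prod_univ_castSucc]
      simp [Fin.snoc_castSucc, Fin.snoc_last]
  have h3 : ∀ f : Fin l ↪ Fin m,
      (∑ i ∈ Finset.univ.image f, (∏ r, p (f r) ^ lam r.castSucc) * p i ^ lam (Fin.last l))
        = ∑ j : Fin l, ∏ r, p (f r) ^ (lam r.castSucc + if r = j then lam (Fin.last l) else 0) := by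
    intro f
    rw [Finset.sum_image (fun a _ b _ h => f.injective h)]
    refine Finset.sum_congr rfl fun j _ => ?_
    have : ∀ r : Fin l, p (f r) ^ (lam r.castSucc + if r = j then lam (Fin.last l) else 0)
        = p (f r) ^ lam r.castSucc * (if r = j then p (f r) ^ lam (Fin.last l) else 1) := by
      intro r; rw [pow_add]; split_ifs <;> simp
    rw [Finset.prod_congr rfl (fun r _ => this r), Finset.prod_mul_distrib,
      Finset.prod_ite_eq' Finset.univ j (fun r => p (f r) ^ lam (Fin.last l))]
    simp
  rw [h1, Finset.sum_congr rfl fun f _ => hsplit f, Finset.sum_add_distrib, h2,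
    Finset.sum_congr rfl fun f _ => h3 f, Finset.sum_comm]
  ring

private def PS (t m : ℕ) (F : (Fin m → ℝ) → ℝ) : Prop :=
  ∃ g : MvPolynomial (Fin (t - 1)) ℝ, ∀ p : Fin m → ℝ,
    F p = MvPolynomial.eval (fun u : Fin (t - 1) => ∑ i, p i ^ ((u : ℕ) + 1)) g

private lemma PS.congr {t m : ℕ} {F G : (Fin m → ℝ) → ℝ} (h : PS t m F)
    (hFG : ∀ p, F p = G p) : PS t m G := by
  obtain ⟨g, hg⟩ := h; exact ⟨g, fun p => (hFG p).symm.trans (hg p)⟩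

private lemma PS.add {t m : ℕ} {F G : (Fin m → ℝ) → ℝ} (hF : PS t m F) (hG : PS t m G) :
    PS t m (fun p => F p + G p) := by
  obtain ⟨f, hf⟩ := hF; obtain ⟨g, hg⟩ := hG
  exact ⟨f + g, fun p => by simp [hf p, hg p]⟩

private lemma PS.mul {t m : ℕ} {F G : (Fin m → ℝ) → ℝ} (hF : PS t m F) (hG : PS t m G) :
    PS t m (fun p => F p * G p) := by
  obtain ⟨f, hf⟩ := hF; obtain ⟨g, hg⟩ := hG
  exact ⟨f * g, fun p => by simp [hf p, hg p]⟩

private lemma PS.smul {t m : ℕ} (c : ℝ) {F : (Fin m → ℝ) → ℝ} (hF : PS t m F) :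
    PS t m (fun p => c * F p) := by
  obtain ⟨f, hf⟩ := hF
  exact ⟨MvPolynomial.C c * f, fun p => by simp [hf p]⟩

private lemma PS.sub {t m : ℕ} {F G : (Fin m → ℝ) → ℝ} (hF : PS t m F) (hG : PS t m G) :
    PS t m (fun p => F p - G p) := by
  obtain ⟨f, hf⟩ := hF; obtain ⟨g, hg⟩ := hG
  exact ⟨f - g, fun p => by simp [hf p, hg p]⟩

private lemma PS.finsum {t m : ℕ} {ι : Type*} (s : Finset ι) (F : ι → (Fin m → ℝ) → ℝ)
    (h : ∀ j ∈ s, PS t m (F j)) : PS t m (fun p => ∑ j ∈ s, F j p) := by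
  classical
  induction s using Finset.induction_on with
  | empty => exact ⟨0, fun p => by simp⟩
  | @insert a s' hx ih =>
    refine PS.congr (PS.add (h a (Finset.mem_insert_self a s'))
      (ih fun j hj => h j (Finset.mem_insert_of_mem hj))) ?_
    intro p
    rw [Finset.sum_insert hx]

private lemma PS.powsum {t m : ℕ} (u : ℕ) (h1 : 1 ≤ u) (h2 : u ≤ t - 1) :
    PS t m (fun p => ∑ i, p i ^ u) := by
  refine ⟨MvPolynomial.X ⟨u - 1, by omega⟩, fun p => ?_⟩
  rw [MvPolynomial.eval_X]
  have h3 : u - 1 + 1 = u := by omega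
  simp [h3]

private lemma PS.mono {t' t m : ℕ} (h : t' ≤ t) {F : (Fin m → ℝ) → ℝ} (hF : PS t' m F) :
    PS t m F := by
  obtain ⟨g, hg⟩ := hF
  refine ⟨MvPolynomial.rename (Fin.castLE (by omega : t' - 1 ≤ t - 1)) g, fun p => ?_⟩
  rw [MvPolynomial.eval_rename, hg p]
  rfl

private lemma main_lemma (m : ℕ) : ∀ (l : ℕ) (lam : Fin l → ℕ), (∀ r, 0 < lam r) →
    ∀ t : ℕ, 0 < t → ∑ r, lam r = t →
    PS t m (fun p => (∑ f : Fin l ↪ Fin m, ∏ r, p (f r) ^ lam r)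
      - (-1 : ℝ) ^ (l - 1) * (Nat.factorial (l - 1)) * ∑ i, p i ^ t) := by
  intro l
  induction l with
  | zero =>
    intro lam hlam t ht hsum
    simp at hsum
    omega
  | succ l ih =>
    intro lam hlam t ht hsum
    rw [Fin.sum_univ_castSucc] at hsum
    rcases Nat.eq_zero_or_pos l with rfl | hl
    · -- one part: lam 0 = t
      refine ⟨0, fun p => ?_⟩
      beta_reduce
      rw [key m 0 lam p]
      have h0 : ∑ f : Fin 0 ↪ Fin m, ∏ r : Fin 0, p (f r) ^ lam r.castSucc
          = (Fintype.card (Fin 0 ↪ Fin m) : ℝ) := by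
        simp
      have hc : Fintype.card (Fin 0 ↪ Fin m) = 1 := by
        rw [Fintype.card_embedding_eq]
        simp
      have hlast : lam (Fin.last 0) = t := by simpa using hsum
      rw [h0, hc, hlast]
      simp
    · -- at least one part before the last one
      obtain ⟨k, rfl⟩ : ∃ k, l = k + 1 := ⟨l - 1, by omega⟩
      have ht'pos : 0 < ∑ r : Fin (k+1), lam r.castSucc := by
        have h00 : 0 < lam ((⟨0, hl⟩ : Fin (k+1)).castSucc) := hlam _
        exact lt_of_lt_of_le h00 (Finset.single_le_sum
          (f := fun r : Fin (k+1) => lam r.castSucc) (fun r _ => Nat.zero_le _)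
          (Finset.mem_univ (⟨0, hl⟩ : Fin (k+1))))
      have hlastpos : 0 < lam (Fin.last (k+1)) := hlam _
      have ht'le : ∑ r : Fin (k+1), lam r.castSucc ≤ t - 1 := by omega
      have hlastle : lam (Fin.last (k+1)) ≤ t - 1 := by omega
      have IH1 : PS (∑ r : Fin (k+1), lam r.castSucc) m (fun p =>
          (∑ f : Fin (k+1) ↪ Fin m, ∏ r, p (f r) ^ lam r.castSucc)
            - (-1 : ℝ) ^ (k + 1 - 1) * (Nat.factorial (k + 1 - 1)) * ∑ i, p i ^ (∑ r : Fin (k+1), lam r.castSucc)) :=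
        ih (fun r => lam r.castSucc) (fun r => hlam _) _ ht'pos rfl
      have IH2 : ∀ j : Fin (k+1), PS t m (fun p =>
          (∑ f : Fin (k+1) ↪ Fin m, ∏ r, p (f r) ^ (lam r.castSucc + if r = j then lam (Fin.last (k+1)) else 0))
            - (-1 : ℝ) ^ (k + 1 - 1) * (Nat.factorial (k + 1 - 1)) * ∑ i, p i ^ t) := by
        intro j
        refine ih _ (fun r => lt_of_lt_of_le (hlam r.castSucc) (Nat.le_add_right _ _)) t ht ?_
        rw [Finset.sum_add_distrib, Finset.sum_ite_eq' Finset.univ j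
          (fun _ => lam (Fin.last (k+1)))]
        simpa using hsum
      have h1 : PS t m (fun p =>
          ((∑ f : Fin (k+1) ↪ Fin m, ∏ r, p (f r) ^ lam r.castSucc)
            - (-1 : ℝ) ^ (k + 1 - 1) * (Nat.factorial (k + 1 - 1)) * ∑ i, p i ^ (∑ r : Fin (k+1), lam r.castSucc))
            * ∑ i, p i ^ lam (Fin.last (k+1))) :=
        PS.mul (PS.mono (by omega) IH1) (PS.powsum _ hlastpos hlastle)
      have h2 : PS t m (fun p =>
          ((-1 : ℝ) ^ (k + 1 - 1) * (Nat.factorial (k + 1 - 1))) *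
            ((∑ i, p i ^ (∑ r : Fin (k+1), lam r.castSucc)) * ∑ i, p i ^ lam (Fin.last (k+1)))) :=
        PS.smul _ (PS.mul (PS.powsum _ ht'pos ht'le) (PS.powsum _ hlastpos hlastle))
      have h3 : PS t m (fun p => ∑ j : Fin (k+1), (
          (∑ f : Fin (k+1) ↪ Fin m, ∏ r, p (f r) ^ (lam r.castSucc + if r = j then lam (Fin.last (k+1)) else 0))
            - (-1 : ℝ) ^ (k + 1 - 1) * (Nat.factorial (k + 1 - 1)) * ∑ i, p i ^ t)) :=
        PS.finsum _ _ (fun j _ => IH2 j)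
      refine PS.congr (PS.sub (PS.add h1 h2) h3) ?_
      intro p
      rw [key m (k+1) lam p]
      rw [Finset.sum_sub_distrib]
      rw [Finset.sum_const]
      simp only [Nat.add_sub_cancel, Finset.card_univ, Fintype.card_fin, nsmul_eq_mul]
      have efact : ((k + 1).factorial : ℝ) = (k + 1) * (k.factorial : ℝ) := by
        rw [Nat.factorial_succ]
        push_cast
        ring
      have epow : (-1 : ℝ) ^ (k + 1) = -(-1 : ℝ) ^ k := by
        rw [pow_succ]
        ring
      rw [efact, epow]
      push_cast
      ring

/-- Let `λ = (λ₁,…,λ_l)` be a partition of `t > 0`. Then the monomial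
symmetric polynomial `m_λ(p) = Σ_{i₁,…,i_l distinct} p_{i₁}^{λ₁} ⋯ p_{i_l}^{λ_l}` equals
`(−1)^{l−1} (l−1)! · s_t(p)` plus a polynomial in the power sums `s_1(p),…,s_{t−1}(p)`,
where `s_u(p) = Σ_i p_i ^ u`. -/
theorem monomial_symmetric_in_power_sums (t l m : ℕ) (ht : 0 < t)
    (lam : Fin l → ℕ) (hlam : ∀ r, 0 < lam r) (hsum : ∑ r, lam r = t) :
    ∃ g : MvPolynomial (Fin (t - 1)) ℝ,
      ∀ p : Fin m → ℝ,
        (∑ f : Fin l ↪ Fin m, ∏ r, p (f r) ^ lam r)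
          = (-1 : ℝ) ^ (l - 1) * (Nat.factorial (l - 1)) * (∑ i, p i ^ t) +
            MvPolynomial.eval (fun u : Fin (t - 1) => ∑ i, p i ^ ((u : ℕ) + 1)) g := by
  obtain ⟨g, hg⟩ := main_lemma m l lam hlam t ht hsum
  exact ⟨g, fun p => by have := hg p; simp only [] at this; linarith⟩
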